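/- For any model knot complexes C₁ and C₂ and any t ∈ (0,2), Υ²_{C₁⊗C₂,t}(t) ≥ min{ Υ²_{C₁,t}(t), Υ²_{C₂,t}(t) }. -/

import Mathlib

open scoped BigOperators

/-- A "pre-complex": a finite distinguished basis `B`, a grading `gr`,
bifiltration functions `alg` and `alex`, and a differential recorded by its
matrix `d` over the field `F₂ = ZMod 2`:  `∂ x = ∑ y, d x y • y`. -/
structure PreComplex where
  B : Type
  fB : Fintype B
  dB : DecidableEq B
  gr : B → ℤ
  alg : B → ℤ
  alex : B → ℤ
  d : B → B → ZMod 2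

attribute [instance] PreComplex.fB PreComplex.dB

namespace PreComplex

variable (C : PreComplex)

/-- Chains: F₂-linear combinations of basis elements. -/
abbrev Chain : Type := C.B → ZMod 2

/-- The boundary of a chain, extending `∂ x = ∑ y, d x y • y` linearly. -/
def bdry (c : C.Chain) : C.Chain := fun y => ∑ x, c x * C.d x y

/-- A chain is homogeneous of grading `k`. -/
def isGraded (c : C.Chain) (k : ℤ) : Prop := ∀ x, c x ≠ 0 → C.gr x = k

def isCycle (c : C.Chain) : Prop := C.bdry c = 0

def isBoundary (c : C.Chain) : Prop := ∃ w : C.Chain, C.bdry w = c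

/-- A cycle of grading 0 representing the nonzero class of `H₀(C)`. -/
def GenCycle (z : C.Chain) : Prop :=
  C.isCycle z ∧ C.isGraded z 0 ∧ ¬ C.isBoundary z

/-- The bifiltration level of a basis element. -/
def lev (x : C.B) : ℤ × ℤ := (C.alg x, C.alex x)

/-- A model knot complex: `∂ ∘ ∂ = 0`; `∂` drops the grading by one and does
not increase either filtration; the homology is one dimensional, concentrated
in grading 0; and the minimum over cycles representing the generator of
`H₀(C)` of their maximal `alg` (resp. `alex`) filtration level is 0. -/
def IsModel : Prop :=
  (∀ x z, (∑ y, C.d x y * C.d y z) = 0) ∧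
  (∀ x y, C.d x y ≠ 0 → C.gr y = C.gr x - 1 ∧ C.alg y ≤ C.alg x ∧ C.alex y ≤ C.alex x) ∧
  (∀ k : ℤ, k ≠ 0 → ∀ z : C.Chain, C.isCycle z → C.isGraded z k → C.isBoundary z) ∧
  (∃ z : C.Chain, C.GenCycle z) ∧
  (∀ z z' : C.Chain, C.GenCycle z → C.GenCycle z' → C.isBoundary (z + z')) ∧
  (∃ z : C.Chain, C.GenCycle z ∧ ∀ x, z x ≠ 0 → C.alg x ≤ 0) ∧
  (∀ z : C.Chain, C.GenCycle z → ∃ x, z x ≠ 0 ∧ 0 ≤ C.alg x) ∧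
  (∃ z : C.Chain, C.GenCycle z ∧ ∀ x, z x ≠ 0 → C.alex x ≤ 0) ∧
  (∀ z : C.Chain, C.GenCycle z → ∃ x, z x ≠ 0 ∧ 0 ≤ C.alex x)

/-- An acyclic complex: conditions (i) and (ii) hold but the homology vanishes. -/
def IsAcyclic : Prop :=
  (∀ x z, (∑ y, C.d x y * C.d y z) = 0) ∧
  (∀ x y, C.d x y ≠ 0 → C.gr y = C.gr x - 1 ∧ C.alg y ≤ C.alg x ∧ C.alex y ≤ C.alex x) ∧
  (∀ z : C.Chain, C.isCycle z → C.isBoundary z)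

end PreComplex

/-- `f_t(i,j) = (t/2)·j + (1 − t/2)·i`. -/
noncomputable def fval (t : ℝ) (p : ℤ × ℤ) : ℝ :=
  (t / 2) * (p.2 : ℝ) + (1 - t / 2) * (p.1 : ℝ)

namespace PreComplex

variable (C : PreComplex)

/-- A chain lies in the subcomplex `F_{t,s}`. -/
def inF (t s : ℝ) (c : C.Chain) : Prop :=
  ∀ x, c x ≠ 0 → fval t (C.lev x) ≤ s

/-- `γ_C(t)`: the minimal `s` such that `H₀(F_{t,s}) → H₀(C)` is surjective,
i.e. such that `F_{t,s}` contains a cycle representing the generator. -/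
noncomputable def gamma (t : ℝ) : ℝ :=
  sInf {s : ℝ | ∃ z : C.Chain, C.GenCycle z ∧ C.inF t s z}

/-- The Upsilon invariant `Υ_C(t) = −2 γ_C(t)`. -/
noncomputable def Upsilon (t : ℝ) : ℝ := -2 * C.gamma t

/-- `P`: the set of bifiltration levels of basis elements. -/
def PSet : Set (ℤ × ℤ) := Set.range C.lev

/-- `P_u = { p ∈ P : f_u(p) = γ_C(u) }`. -/
def Pt (u : ℝ) : Set (ℤ × ℤ) := {p ∈ C.PSet | fval u p = C.gamma u}

/-- `p` is the negative pivot point of `C` at `t`. -/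
def IsNegPivot (t : ℝ) (p : ℤ × ℤ) : Prop :=
  ∃ δ₀ > (0 : ℝ), ∀ δ : ℝ, 0 < δ → δ < δ₀ → C.Pt (t - δ) ∩ C.Pt t = {p}

/-- `p` is the positive pivot point of `C` at `t`. -/
def IsPosPivot (t : ℝ) (p : ℤ × ℤ) : Prop :=
  ∃ δ₀ > (0 : ℝ), ∀ δ : ℝ, 0 < δ → δ < δ₀ → C.Pt (t + δ) ∩ C.Pt t = {p}

/-- Cycles in `F_{t−δ, γ_C(t−δ)}` representing the nonzero class of `H₀(C)`. -/
def ZminusAt (t δ : ℝ) : Set C.Chain :=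
  {z | C.GenCycle z ∧ C.inF (t - δ) (C.gamma (t - δ)) z}

/-- Cycles in `F_{t+δ, γ_C(t+δ)}` representing the nonzero class of `H₀(C)`. -/
def ZplusAt (t δ : ℝ) : Set C.Chain :=
  {z | C.GenCycle z ∧ C.inF (t + δ) (C.gamma (t + δ)) z}

/-- `Z⁻`: the (eventual, for all sufficiently small `δ > 0`) set of cycles in
`F_{t−δ, γ_C(t−δ)}` representing the nonzero class of `H₀(C)`. -/
def Zminus (t : ℝ) : Set C.Chain :=
  {z | ∃ δ₀ > (0 : ℝ), ∀ δ : ℝ, 0 < δ → δ < δ₀ → z ∈ C.ZminusAt t δ}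

/-- `Z⁺`: the (eventual, for all sufficiently small `δ > 0`) set of cycles in
`F_{t+δ, γ_C(t+δ)}` representing the nonzero class of `H₀(C)`. -/
def Zplus (t : ℝ) : Set C.Chain :=
  {z | ∃ δ₀ > (0 : ℝ), ∀ δ : ℝ, 0 < δ → δ < δ₀ → z ∈ C.ZplusAt t δ}

/-- A basis element lies in the subcomplex `F_{t,γ_C(t)} + F_{s,r}`. -/
def inRegion (t s r : ℝ) (x : C.B) : Prop :=
  fval t (C.lev x) ≤ C.gamma t ∨ fval s (C.lev x) ≤ r

/-- `z` and `z'` represent the same homology class in `H₀(F_{t,γ_C(t)} + F_{s,r})`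
(over F₂ the difference `z − z'` is `z + z'`). -/
def sameClass (t s r : ℝ) (z z' : C.Chain) : Prop :=
  (∀ x, z x ≠ 0 → C.inRegion t s r x) ∧
  (∀ x, z' x ≠ 0 → C.inRegion t s r x) ∧
  ∃ w : C.Chain, (∀ x, w x ≠ 0 → C.inRegion t s r x) ∧ C.bdry w = z + z'

/-- The set of `r` for which some `z⁻ ∈ Z⁻` and `z⁺ ∈ Z⁺` represent the same
class in `H₀(F_{t,γ_C(t)} + F_{s,r})`. -/
def gamma2Set (t s : ℝ) : Set ℝ :=
  {r | ∃ zm ∈ C.Zminus t, ∃ zp ∈ C.Zplus t, C.sameClass t s r zm zp}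

/-- `γ²_{C,t}(s)`, as an extended real: the minimum of `gamma2Set`
(`−∞` if the condition holds for every `r`). -/
noncomputable def gamma2 (t s : ℝ) : EReal :=
  sInf ((fun r : ℝ => (r : EReal)) '' C.gamma2Set t s)

/-- `Υ²_{C,t}(s) = −2 (γ²_{C,t}(s) − γ_C(t))`. -/
noncomputable def Upsilon2 (t s : ℝ) : EReal :=
  (-2 : EReal) * (C.gamma2 t s - (C.gamma t : EReal))

end PreComplex

/-- The jump of the derivative of `f` at `t`: the right-hand derivative minus
the left-hand derivative. -/
noncomputable def derivJump (f : ℝ → ℝ) (t : ℝ) : ℝ :=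
  derivWithin f (Set.Ici t) t - derivWithin f (Set.Iic t) t

/-- Direct sum of two pre-complexes. -/
def PreComplex.dsum (C A : PreComplex) : PreComplex where
  B := C.B ⊕ A.B
  fB := inferInstance
  dB := inferInstance
  gr := Sum.elim C.gr A.gr
  alg := Sum.elim C.alg A.alg
  alex := Sum.elim C.alex A.alex
  d := fun x y =>
    match x, y with
    | Sum.inl x, Sum.inl y => C.d x y
    | Sum.inr x, Sum.inr y => A.d x y
    | _, _ => 0

/-- Tensor product of two pre-complexes. -/
def PreComplex.tensor (C₁ C₂ : PreComplex) : PreComplex where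
  B := C₁.B × C₂.B
  fB := inferInstance
  dB := inferInstance
  gr := fun x => C₁.gr x.1 + C₂.gr x.2
  alg := fun x => C₁.alg x.1 + C₂.alg x.2
  alex := fun x => C₁.alex x.1 + C₂.alex x.2
  d := fun x y =>
    (if x.2 = y.2 then C₁.d x.1 y.1 else 0) + (if x.1 = y.1 then C₂.d x.2 y.2 else 0)

/-- An isomorphism of pre-complexes: a bijection of the distinguished bases
preserving `gr`, `alg`, `alex`, whose linear extension commutes with the
differentials. -/
def PreComplex.Iso (C₁ C₂ : PreComplex) : Prop :=
  ∃ e : C₁.B ≃ C₂.B,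
    (∀ x, C₂.gr (e x) = C₁.gr x) ∧
    (∀ x, C₂.alg (e x) = C₁.alg x) ∧
    (∀ x, C₂.alex (e x) = C₁.alex x) ∧
    (∀ x y, C₂.d (e x) (e y) = C₁.d x y)

/-- Stable equivalence of pre-complexes: isomorphism after adding acyclic
summands. -/
def PreComplex.StablyEquiv (C₁ C₂ : PreComplex) : Prop :=
  ∃ A₁ A₂ : PreComplex, A₁.IsAcyclic ∧ A₂.IsAcyclic ∧ (C₁.dsum A₁).Iso (C₂.dsum A₂)


/-! ### Auxiliary development -/

instance : Fact (Nat.Prime 2) := ⟨Nat.prime_two⟩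

namespace PreComplex

variable {C : PreComplex}

lemma zmod2_cases (a : ZMod 2) : a = 0 ∨ a = 1 := by revert a; decide

lemma zmod2_add_self (a : ZMod 2) : a + a = 0 := by revert a; decide

lemma chain_add_self (p : C.Chain) : p + p = 0 := by
  funext x; exact zmod2_add_self (p x)

lemma chain_eq_of_add_eq {p q r : C.Chain} (h : p + q = r) : p = r + q := by
  rw [← h, add_assoc, chain_add_self, add_zero]

lemma bdry_add (p q : C.Chain) : C.bdry (p + q) = C.bdry p + C.bdry q := by
  funext y
  simp only [bdry, Pi.add_apply, add_mul, Finset.sum_add_distrib]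

lemma bdry_zero : C.bdry (0 : C.Chain) = 0 := by
  funext y; simp [bdry]

lemma bdry_smul (a : ZMod 2) (p : C.Chain) : C.bdry (a • p) = a • C.bdry p := by
  funext y
  simp only [bdry, Pi.smul_apply, smul_eq_mul, Finset.mul_sum, mul_assoc]

/-- The differential as a linear map. -/
noncomputable def Dmap (C : PreComplex) : C.Chain →ₗ[ZMod 2] C.Chain where
  toFun := C.bdry
  map_add' := bdry_add
  map_smul' := bdry_smul

@[simp] lemma Dmap_apply (c : C.Chain) : C.Dmap c = C.bdry c := rfl

lemma bdry_bdry (h2 : ∀ x z, (∑ y, C.d x y * C.d y z) = 0) (c : C.Chain) :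
    C.bdry (C.bdry c) = 0 := by
  funext z
  simp only [bdry, Pi.zero_apply, Finset.sum_mul]
  rw [Finset.sum_comm]
  have : ∀ x ∈ Finset.univ, (∑ y, c x * C.d x y * C.d y z) = 0 := by
    intro x _
    have : (∑ y, c x * C.d x y * C.d y z) = c x * ∑ y, C.d x y * C.d y z := by
      rw [Finset.mul_sum]; apply Finset.sum_congr rfl; intro y _; ring
    rw [this, h2, mul_zero]
  rw [Finset.sum_congr rfl this, Finset.sum_const, smul_zero]

lemma isBoundary_add {p q : C.Chain} (hp : C.isBoundary p) (hq : C.isBoundary q) :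
    C.isBoundary (p + q) := by
  obtain ⟨w, hw⟩ := hp; obtain ⟨v, hv⟩ := hq
  exact ⟨w + v, by rw [bdry_add, hw, hv]⟩

lemma isBoundary_zero : C.isBoundary (0 : C.Chain) := ⟨0, bdry_zero⟩

lemma isBoundary_sum {ι : Type*} (s : Finset ι) (f : ι → C.Chain)
    (h : ∀ i ∈ s, C.isBoundary (f i)) : C.isBoundary (∑ i ∈ s, f i) := by
  classical
  induction s using Finset.induction_on with
  | empty => simpa using isBoundary_zero
  | insert _ _ hx ih =>
    rw [Finset.sum_insert hx]
    exact isBoundary_add (h _ (Finset.mem_insert_self _ _))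
      (ih fun i hi => h i (Finset.mem_insert_of_mem hi))

lemma genCycle_ne_zero {z : C.Chain} (hz : C.GenCycle z) : z ≠ 0 := by
  intro h; exact hz.2.2 (h ▸ isBoundary_zero)

/-- Evaluation of a cocycle on a boundary vanishes. -/
lemma pair_bdry_eq_zero {ψ : C.B → ZMod 2}
    (hψ : ∀ a, (∑ a', C.d a a' * ψ a') = 0) (w : C.Chain) :
    (∑ y, C.bdry w y * ψ y) = 0 := by
  simp only [bdry, Finset.sum_mul]
  rw [Finset.sum_comm]
  have : ∀ x ∈ Finset.univ, (∑ y, w x * C.d x y * ψ y) = 0 := by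
    intro x _
    have : (∑ y, w x * C.d x y * ψ y) = w x * ∑ y, C.d x y * ψ y := by
      rw [Finset.mul_sum]; apply Finset.sum_congr rfl; intro y _; ring
    rw [this, hψ, mul_zero]
  rw [Finset.sum_congr rfl this, Finset.sum_const, smul_zero]

end PreComplex

namespace PreComplex

variable {C : PreComplex}

/-- Graded part of a chain. -/
def gpart (C : PreComplex) (k : ℤ) (c : C.Chain) : C.Chain :=
  fun x => if C.gr x = k then c x else 0

lemma gpart_apply_ne {k : ℤ} {c : C.Chain} {x : C.B} (h : C.gpart k c x ≠ 0) :
    C.gr x = k ∧ c x ≠ 0 := by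
  by_cases hg : C.gr x = k
  · exact ⟨hg, by simpa [gpart, hg] using h⟩
  · simp [gpart, hg] at h

lemma gpart_isGraded (k : ℤ) (c : C.Chain) : C.isGraded (C.gpart k c) k :=
  fun x hx => (gpart_apply_ne hx).1

lemma gpart_add (k : ℤ) (p q : C.Chain) :
    C.gpart k (p + q) = C.gpart k p + C.gpart k q := by
  funext x; by_cases h : C.gr x = k <;> simp [gpart, h]

lemma gpart_of_isGraded {k : ℤ} {c : C.Chain} (h : C.isGraded c k) :
    C.gpart k c = c := by
  funext x
  by_cases hg : C.gr x = k
  · simp [gpart, hg]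
  · simp only [gpart, if_neg hg]
    by_cases hc : c x = 0
    · exact hc.symm
    · exact absurd (h x hc) hg

lemma bdry_gpart (hgr : ∀ x y, C.d x y ≠ 0 → C.gr y = C.gr x - 1) (k : ℤ) (c : C.Chain) :
    C.bdry (C.gpart k c) = C.gpart (k - 1) (C.bdry c) := by
  funext y
  by_cases hy : C.gr y = k - 1
  · show (∑ x, (if C.gr x = k then c x else 0) * C.d x y) = _
    rw [show C.gpart (k-1) (C.bdry c) y = ∑ x, c x * C.d x y by simp [gpart, hy, bdry]]
    apply Finset.sum_congr rfl
    intro x _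
    by_cases hx : C.gr x = k
    · rw [if_pos hx]
    · rw [if_neg hx, zero_mul]
      by_cases hd : C.d x y = 0
      · rw [hd, mul_zero]
      · exact absurd (by have := hgr x y hd; omega : C.gr x = k) hx
  · show (∑ x, (if C.gr x = k then c x else 0) * C.d x y) = _
    rw [show C.gpart (k-1) (C.bdry c) y = 0 by simp [gpart, hy]]
    apply Finset.sum_eq_zero
    intro x _
    by_cases hx : C.gr x = k
    · by_cases hd : C.d x y = 0
      · rw [hd, mul_zero]
      · exact absurd (by have := hgr x y hd; omega : C.gr y = k - 1) hy
    · rw [if_neg hx, zero_mul]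

lemma gpart_isCycle (hgr : ∀ x y, C.d x y ≠ 0 → C.gr y = C.gr x - 1)
    {c : C.Chain} (hc : C.isCycle c) (k : ℤ) : C.isCycle (C.gpart k c) := by
  unfold isCycle at *
  rw [bdry_gpart hgr, hc]
  funext x; simp [gpart]

/-- Every cycle is a boundary plus a multiple of a fixed generating cycle. -/
lemma cycle_decomp (hM : C.IsModel) {z₀ : C.Chain} (hz₀ : C.GenCycle z₀)
    {c : C.Chain} (hc : C.isCycle c) :
    ∃ ε : ZMod 2, C.isBoundary (c + ε • z₀) := by
  classical
  obtain ⟨-, hgr', hlow, -, hsame, -⟩ := hM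
  have hgr : ∀ x y, C.d x y ≠ 0 → C.gr y = C.gr x - 1 := fun x y h => (hgr' x y h).1
  set s : Finset ℤ := (Finset.univ.image C.gr).erase 0 with hs
  have hrest : C.isBoundary (∑ k ∈ s, C.gpart k c) := by
    apply isBoundary_sum
    intro k hk
    have hk0 : k ≠ 0 := (Finset.mem_erase.mp hk).1
    exact hlow k hk0 _ (gpart_isCycle hgr hc k) (gpart_isGraded k c)
  have hsplit : c = (∑ k ∈ s, C.gpart k c) + C.gpart 0 c := by
    funext x
    have h1 : (∑ k ∈ s, C.gpart k c) x = ∑ k ∈ s, (if C.gr x = k then c x else 0) := by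
      rw [Finset.sum_apply]; rfl
    have h2 : (∑ k ∈ s, (if C.gr x = k then c x else 0))
        = if C.gr x ∈ s then c x else 0 := Finset.sum_ite_eq s (C.gr x) (fun _ => c x)
    have h0s : (0:ℤ) ∉ s := by simp [hs]
    by_cases h0 : C.gr x = 0
    · have : C.gr x ∉ s := by simp [hs, h0]
      simp [Pi.add_apply, h1, h2, this, gpart, h0, h0s]
    · have : C.gr x ∈ s := by
        simp only [hs, Finset.mem_erase]
        exact ⟨h0, Finset.mem_image_of_mem _ (Finset.mem_univ x)⟩
      simp [Pi.add_apply, h1, h2, this, gpart, h0]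
  have h0cyc : C.isCycle (C.gpart 0 c) := gpart_isCycle hgr hc 0
  by_cases hb : C.isBoundary (C.gpart 0 c)
  · refine ⟨0, ?_⟩
    rw [zero_smul, add_zero, hsplit]
    exact isBoundary_add hrest hb
  · refine ⟨1, ?_⟩
    have hgen : C.GenCycle (C.gpart 0 c) := ⟨h0cyc, gpart_isGraded 0 c, hb⟩
    have : C.isBoundary (C.gpart 0 c + z₀) := hsame _ _ hgen hz₀
    rw [one_smul, hsplit, add_assoc]
    exact isBoundary_add hrest this

end PreComplex

namespace PreComplex

variable {C : PreComplex}

/-- The filtration level of a basis element at parameter `u`. -/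
noncomputable def lf (C : PreComplex) (u : ℝ) (x : C.B) : ℝ := fval u (C.lev x)

/-- Support of a chain as a finset. -/
def suppF (C : PreComplex) (z : C.Chain) : Finset C.B :=
  Finset.univ.filter (fun x => z x ≠ 0)

lemma mem_suppF {z : C.Chain} {x : C.B} : x ∈ C.suppF z ↔ z x ≠ 0 := by
  simp [suppF]

lemma suppF_nonempty {z : C.Chain} (hz : z ≠ 0) : (C.suppF z).Nonempty := by
  have : ∃ x, z x ≠ 0 := by
    by_contra h
    push_neg at h
    exact hz (funext fun x => h x)
  obtain ⟨x, hx⟩ := this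
  exact ⟨x, mem_suppF.mpr hx⟩

lemma inF_iff (u s : ℝ) (z : C.Chain) : C.inF u s z ↔ ∀ x ∈ C.suppF z, C.lf u x ≤ s := by
  constructor
  · intro h x hx; exact h x (mem_suppF.mp hx)
  · intro h x hx; exact h x (mem_suppF.mpr hx)

/-- Attainment and minimality of `gamma`. -/
lemma gamma_facts (hex : ∃ z, C.GenCycle z) (u : ℝ) :
    (∃ z, C.GenCycle z ∧ C.inF u (C.gamma u) z) ∧
    (∀ s : ℝ, (∃ z : C.Chain, C.GenCycle z ∧ C.inF u s z) → C.gamma u ≤ s) := by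
  classical
  set S : Set ℝ := {s : ℝ | ∃ z : C.Chain, C.GenCycle z ∧ C.inF u s z} with hS
  have hgam : C.gamma u = sInf S := rfl
  set Gs : Finset C.Chain := Finset.univ.filter (fun z => C.GenCycle z) with hGs
  have hmemG : ∀ z : C.Chain, z ∈ Gs ↔ C.GenCycle z := by
    intro z; simp [hGs]
  obtain ⟨z₁, hz₁⟩ := hex
  have hGne : (Gs.attach).Nonempty := ⟨⟨z₁, (hmemG z₁).mpr hz₁⟩, Finset.mem_attach _ _⟩
  set f : {z // z ∈ Gs} → ℝ := fun z =>
    (C.suppF z.1).sup' (suppF_nonempty (genCycle_ne_zero ((hmemG z.1).mp z.2))) (C.lf u)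
    with hf
  obtain ⟨zm, -, hzm⟩ := Finset.exists_min_image Gs.attach f hGne
  have hmem_S : ∀ z : {z // z ∈ Gs}, f z ∈ S := by
    intro z
    refine ⟨z.1, (hmemG z.1).mp z.2, ?_⟩
    rw [inF_iff]
    intro x hx
    exact Finset.le_sup' (C.lf u) hx
  have hlb : ∀ s ∈ S, f zm ≤ s := by
    rintro s ⟨z, hz, hzF⟩
    have hzG : z ∈ Gs := (hmemG z).mpr hz
    refine le_trans (hzm ⟨z, hzG⟩ (Finset.mem_attach _ _)) ?_
    rw [hf]
    apply Finset.sup'_le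
    intro x hx
    exact (inF_iff u s z).mp hzF x hx
  have : sInf S = f zm :=
    le_antisymm (csInf_le ⟨f zm, hlb⟩ (hmem_S zm)) (le_csInf ⟨f zm, hmem_S zm⟩ hlb)
  constructor
  · obtain ⟨z, hz, hzF⟩ := hmem_S zm
    exact ⟨z, hz, by rwa [hgam, this]⟩
  · intro s hs
    rw [hgam, this]
    exact hlb s hs

lemma gamma_le (hex : ∃ z, C.GenCycle z) {u s : ℝ} {z : C.Chain}
    (hz : C.GenCycle z) (hzF : C.inF u s z) : C.gamma u ≤ s :=
  (gamma_facts hex u).2 s ⟨z, hz, hzF⟩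

lemma exists_gamma_min (hex : ∃ z, C.GenCycle z) (u : ℝ) :
    ∃ z, C.GenCycle z ∧ C.inF u (C.gamma u) z := (gamma_facts hex u).1

/-- Every generating cycle has a basis element at filtration level at least `gamma`. -/
lemma gen_exists_level_ge (hex : ∃ z, C.GenCycle z) (u : ℝ) {z : C.Chain}
    (hz : C.GenCycle z) : ∃ x, z x ≠ 0 ∧ C.gamma u ≤ C.lf u x := by
  have hne := suppF_nonempty (C := C) (genCycle_ne_zero hz)
  set s : ℝ := (C.suppF z).sup' hne (C.lf u) with hs
  have h1 : C.gamma u ≤ s := by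
    apply gamma_le hex hz
    rw [inF_iff]
    intro x hx
    exact Finset.le_sup' (C.lf u) hx
  obtain ⟨x, hx, hxs⟩ := Finset.exists_mem_eq_sup' hne (C.lf u)
  exact ⟨x, mem_suppF.mp hx, by rw [hs, hxs] at h1; exact h1⟩

lemma isModel_gen (hM : C.IsModel) : ∃ z, C.GenCycle z := hM.2.2.2.1

end PreComplex

namespace PreComplex

variable {C : PreComplex}

lemma dual_expand (f : Module.Dual (ZMod 2) C.Chain) (c : C.Chain) :
    f c = ∑ a, c a * f ((Pi.single a 1 : C.Chain)) := by
  conv_lhs => rw [← Finset.univ_sum_single c, map_sum]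
  apply Finset.sum_congr rfl
  intro a _
  have h : Pi.single a (c a) = c a • (Pi.single a 1 : C.Chain) := by
    funext x; by_cases h : x = a <;> simp [Pi.single_apply, h]
  rw [h, map_smul, smul_eq_mul]

lemma bdry_single (a : C.B) : C.bdry ((Pi.single a 1 : C.Chain)) = fun y => C.d a y := by
  funext y
  show (∑ x, (Pi.single a 1 : C.Chain) x * C.d x y) = C.d a y
  rw [Finset.sum_eq_single a]
  · simp
  · intro x _ hx; simp [Pi.single_apply, hx]
  · intro h; exact absurd (Finset.mem_univ a) h

/-- Existence of a cocycle functional evaluating to `1` on generating cycles,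
supported in filtration levels `≥ gamma u` and grading `0`. -/
lemma exists_cocycle_functional (hM : C.IsModel) (u : ℝ) :
    ∃ ψ : C.B → ZMod 2,
      (∀ a, (∑ a', C.d a a' * ψ a') = 0) ∧
      (∀ z, C.GenCycle z → (∑ a, z a * ψ a) = 1) ∧
      (∀ a, ψ a ≠ 0 → C.gamma u ≤ C.lf u a) := by
  classical
  obtain ⟨z₀, hz₀⟩ := isModel_gen hM
  have hex : ∃ z, C.GenCycle z := ⟨z₀, hz₀⟩
  have hgr : ∀ x y, C.d x y ≠ 0 → C.gr y = C.gr x - 1 := fun x y h => (hM.2.1 x y h).1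
  set Wbad : Submodule (ZMod 2) C.Chain :=
    { carrier := {c | ∀ x, c x ≠ 0 → (C.lf u x < C.gamma u ∨ C.gr x ≠ 0)}
      add_mem' := by
        intro a b ha hb x hx
        by_cases h : a x ≠ 0
        · exact ha x h
        · push_neg at h
          apply hb x
          intro hb0
          exact hx (by simp [Pi.add_apply, h, hb0])
      zero_mem' := by intro x hx; simp at hx
      smul_mem' := by
        intro r c hc x hx
        apply hc x
        intro h0
        exact hx (by simp [Pi.smul_apply, h0]) } with hWbad
  set W : Submodule (ZMod 2) C.Chain := LinearMap.range C.Dmap ⊔ Wbad with hW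
  have hz₀W : z₀ ∉ W := by
    intro hmem
    rw [hW, Submodule.mem_sup] at hmem
    obtain ⟨b, hb, v, hv, hbv⟩ := hmem
    obtain ⟨w, hw⟩ := hb
    have hveq : v = C.bdry w + z₀ := by
      have : b + v = z₀ := hbv
      calc v = b + (b + v) := by rw [← add_assoc, chain_add_self, zero_add]
      _ = C.bdry w + z₀ := by rw [this, ← hw]; rfl
    set v₀ : C.Chain := C.gpart 0 v with hv₀
    have hv₀eq : v₀ = z₀ + C.bdry (C.gpart 1 w) := by
      rw [hv₀, hveq, gpart_add, gpart_of_isGraded hz₀.2.1,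
        show C.bdry (C.gpart 1 w) = C.gpart 0 (C.bdry w) by
          rw [bdry_gpart hgr]; norm_num, add_comm]
    have hgen : C.GenCycle v₀ := by
      refine ⟨?_, gpart_isGraded 0 v, ?_⟩
      · show C.bdry v₀ = 0
        rw [hv₀eq, bdry_add, hz₀.1, bdry_bdry hM.1, add_zero]
      · rintro ⟨q, hq⟩
        apply hz₀.2.2
        refine ⟨q + C.gpart 1 w, ?_⟩
        rw [bdry_add, hq, hv₀eq, add_assoc, chain_add_self, add_zero]
    obtain ⟨x, hx, hxlev⟩ := gen_exists_level_ge hex u hgen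
    obtain ⟨hx0, hvx⟩ := gpart_apply_ne hx
    rcases hv x hvx with h | h
    · linarith
    · exact h hx0
  obtain ⟨f, hf0, hfW⟩ := Submodule.exists_dual_map_eq_bot_of_notMem hz₀W inferInstance
  have hker : ∀ w ∈ W, f w = 0 := by
    intro w hw
    have : f w ∈ Submodule.map f W := ⟨w, hw, rfl⟩
    rw [hfW] at this
    exact (Submodule.mem_bot (ZMod 2)).mp this
  have hfz₀ : f z₀ = 1 := by rcases zmod2_cases (f z₀) with h | h
                             · exact absurd h hf0
                             · exact h
  refine ⟨fun a => f ((Pi.single a 1 : C.Chain)), ?_, ?_, ?_⟩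
  · intro a
    have h1 : f (C.bdry ((Pi.single a 1 : C.Chain))) = 0 := by
      apply hker
      exact Submodule.mem_sup_left (LinearMap.mem_range_self C.Dmap _)
    rw [dual_expand, bdry_single] at h1
    exact h1
  · intro z hz
    obtain ⟨w, hw⟩ := hM.2.2.2.2.1 z z₀ hz hz₀
    have hzeq : z = C.bdry w + z₀ := by
      calc z = (z + z₀) + z₀ := by rw [add_assoc, chain_add_self, add_zero]
      _ = C.bdry w + z₀ := by rw [hw]
    have : f z = 1 := by
      rw [hzeq, map_add, hfz₀]
      have : f (C.bdry w) = 0 :=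
        hker _ (Submodule.mem_sup_left (LinearMap.mem_range_self C.Dmap _))
      rw [this, zero_add]
    rw [← dual_expand, this]
  · intro a ha
    by_contra hlt
    push_neg at hlt
    apply ha
    apply hker
    apply Submodule.mem_sup_right
    intro x hx
    have hxa : x = a := by
      by_contra hne
      exact hx (by simp [Pi.single_apply, hne])
    subst hxa
    exact Or.inl hlt

end PreComplex

namespace PreComplex

variable {C : PreComplex}

/-- Linear functional associated to a cocycle. -/
noncomputable def psif (C : PreComplex) (ψ : C.B → ZMod 2) :
    C.Chain →ₗ[ZMod 2] ZMod 2 where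
  toFun := fun c => ∑ a, c a * ψ a
  map_add' := by
    intro p q
    simp [Pi.add_apply, add_mul, Finset.sum_add_distrib]
  map_smul' := by
    intro r p
    simp [Pi.smul_apply, smul_eq_mul, Finset.mul_sum, mul_assoc]

@[simp] lemma psif_apply (ψ : C.B → ZMod 2) (c : C.Chain) :
    C.psif ψ c = ∑ a, c a * ψ a := rfl

lemma psif_bdry {ψ : C.B → ZMod 2} (hψ : ∀ a, (∑ a', C.d a a' * ψ a') = 0)
    (w : C.Chain) : C.psif ψ (C.bdry w) = 0 := pair_bdry_eq_zero hψ w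

/-- Existence of a homotopy realizing the one-dimensionality of homology. -/
lemma exists_homotopy (hM : C.IsModel) {z₀ : C.Chain} (hz₀ : C.GenCycle z₀)
    {ψ : C.B → ZMod 2} (hco : ∀ a, (∑ a', C.d a a' * ψ a') = 0)
    (hev : (∑ a, z₀ a * ψ a) = 1) :
    ∃ (h : C.Chain →ₗ[ZMod 2] C.Chain) (θ : C.Chain →ₗ[ZMod 2] ZMod 2),
      (∀ v, C.bdry (h v) + h (C.bdry v) = v + θ v • z₀) ∧
      (∀ v, θ (C.bdry v) = 0) := by
  classical
  set ψf := C.psif ψ with hψf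
  have hψD : ∀ v, ψf (C.bdry v) = 0 := psif_bdry hco
  set Z : Submodule (ZMod 2) C.Chain := LinearMap.ker C.Dmap with hZdef
  have memZ : ∀ v : C.Chain, C.bdry v ∈ Z := by
    intro v
    rw [hZdef, LinearMap.mem_ker, Dmap_apply, bdry_bdry hM.1]
  obtain ⟨X, hX⟩ := Z.exists_isCompl
  set QZ : C.Chain →ₗ[ZMod 2] Z := Z.linearProjOfIsCompl X hX with hQZ
  set PX : C.Chain →ₗ[ZMod 2] X := X.linearProjOfIsCompl Z hX.symm with hPX
  have key0 : ∀ v, (QZ v : C.Chain) + (PX v : C.Chain) = v := fun v =>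
    Submodule.projection_add_projection_eq_self hX v
  set Bd : Submodule (ZMod 2) C.Chain := LinearMap.range C.Dmap with hBddef
  have memBd : ∀ z : C.Chain, C.isCycle z → z + ψf z • z₀ ∈ Bd := by
    intro z hzc
    obtain ⟨ε, w, hw⟩ := cycle_decomp hM hz₀ hzc
    have hε : ε = ψf z := by
      have h0 : ψf (z + ε • z₀) = 0 := by rw [← hw]; exact hψD w
      have h1 : ψf z + ε * ψf z₀ = 0 := by
        simpa [map_add, map_smul, smul_eq_mul] using h0
      have hz₀1 : ψf z₀ = 1 := hev
      rw [hz₀1, mul_one] at h1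
      calc ε = ψf z + (ψf z + ε) := by rw [← add_assoc, zmod2_add_self, zero_add]
      _ = ψf z := by rw [h1, add_zero]
    exact ⟨w, by rw [Dmap_apply, hw, hε]⟩
  have bdry_PX : ∀ v, C.bdry ((PX v : C.Chain)) = C.bdry v := by
    intro v
    conv_rhs => rw [← key0 v]
    rw [bdry_add]
    have : C.bdry ((QZ v : C.Chain)) = 0 := (QZ v).2
    rw [this, zero_add]
  set E : X →ₗ[ZMod 2] Bd :=
    (C.Dmap.comp X.subtype).codRestrict Bd (fun x => LinearMap.mem_range_self _ _) with hEdef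
  have hEval : ∀ x : X, (E x : C.Chain) = C.bdry (x : C.Chain) := fun x => rfl
  have hker : ∀ x : X, E x = 0 → x = 0 := by
    intro x hx
    have h1 : C.bdry (x : C.Chain) = 0 := by
      rw [← hEval, hx]; rfl
    have h2 : (x : C.Chain) ∈ Z := by rw [hZdef, LinearMap.mem_ker, Dmap_apply, h1]
    have h3 : (x : C.Chain) = 0 := Submodule.disjoint_def.mp hX.disjoint _ h2 x.2
    exact Subtype.ext h3
  have hEinj : Function.Injective E :=
    LinearMap.ker_eq_bot.mp (LinearMap.ker_eq_bot'.mpr hker)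
  have hEsurj : Function.Surjective E := by
    rintro b
    obtain ⟨v, hv⟩ := b.2
    refine ⟨PX v, Subtype.ext ?_⟩
    rw [hEval, bdry_PX, ← Dmap_apply, hv]
  set equiv := LinearEquiv.ofBijective E ⟨hEinj, hEsurj⟩ with hequiv
  set L1 : C.Chain →ₗ[ZMod 2] C.Chain := Z.subtype.comp QZ with hL1
  set ψL : C.Chain →ₗ[ZMod 2] ZMod 2 := ψf.comp L1 with hψL
  set L2 : C.Chain →ₗ[ZMod 2] C.Chain := L1 + ψL.smulRight z₀ with hL2
  have hL2v : ∀ v, L2 v = (QZ v : C.Chain) + ψf ((QZ v : C.Chain)) • z₀ := fun v => rfl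
  have hL2mem : ∀ v, L2 v ∈ Bd := by
    intro v
    rw [hL2v]
    exact memBd _ (QZ v).2
  set ρ : C.Chain →ₗ[ZMod 2] Bd := L2.codRestrict Bd hL2mem with hρ
  set hmap : C.Chain →ₗ[ZMod 2] C.Chain :=
    X.subtype.comp ((equiv.symm : Bd →ₗ[ZMod 2] X).comp ρ) with hhmap
  refine ⟨hmap, ψL, ?_, ?_⟩
  · intro v
    have hQbd : QZ (C.bdry v) = ⟨C.bdry v, memZ v⟩ := by
      rw [hQZ]
      exact Submodule.linearProjOfIsCompl_apply_left hX ⟨C.bdry v, memZ v⟩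
    -- boundary of hmap v
    have h1 : C.bdry (hmap v) = L2 v := by
      have : E (equiv.symm (ρ v)) = ρ v := equiv.apply_symm_apply (ρ v)
      have h2 : (E (equiv.symm (ρ v)) : C.Chain) = L2 v := by rw [this]; rfl
      rw [← h2, hEval]; rfl
    -- hmap of boundary
    have h2 : hmap (C.bdry v) = (PX v : C.Chain) := by
      have hρbd : ρ (C.bdry v) = E (PX v) := by
        apply Subtype.ext
        show L2 (C.bdry v) = (E (PX v) : C.Chain)
        rw [hL2v, hEval, bdry_PX]
        have hcoe : ((QZ (C.bdry v)) : C.Chain) = C.bdry v := by rw [hQbd]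
        rw [hcoe, hψD, zero_smul, add_zero]
      show (X.subtype (equiv.symm (ρ (C.bdry v))) : C.Chain) = _
      have hEq : E (PX v) = equiv (PX v) := rfl
      rw [hρbd, hEq, equiv.symm_apply_apply]
      rfl
    rw [h1, h2, hL2v]
    have hθ : ψL v = ψf ((QZ v : C.Chain)) := rfl
    rw [hθ]
    calc (QZ v : C.Chain) + ψf ((QZ v : C.Chain)) • z₀ + (PX v : C.Chain)
        = ((QZ v : C.Chain) + (PX v : C.Chain)) + ψf ((QZ v : C.Chain)) • z₀ := by
          rw [add_assoc, add_assoc, add_comm (ψf ((QZ v : C.Chain)) • z₀)]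
    _ = v + ψf ((QZ v : C.Chain)) • z₀ := by rw [key0]
  · intro v
    have hQbd : QZ (C.bdry v) = ⟨C.bdry v, memZ v⟩ := by
      rw [hQZ]
      exact Submodule.linearProjOfIsCompl_apply_left hX ⟨C.bdry v, memZ v⟩
    show ψf ((QZ (C.bdry v) : C.Chain)) = 0
    rw [hQbd]
    exact hψD v

end PreComplex

namespace PreComplex

variable {C₁ C₂ : PreComplex}

lemma zmod2_eq_of_add_eq_zero : ∀ {a b : ZMod 2}, a + b = 0 → a = b := by decide

/-- Tensor product of chains. -/
def ztensor (p : C₁.Chain) (q : C₂.Chain) : (C₁.tensor C₂).Chain :=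
  fun x => p x.1 * q x.2

lemma ztensor_apply (p : C₁.Chain) (q : C₂.Chain) (a : C₁.B) (b : C₂.B) :
    ztensor p q (a, b) = p a * q b := rfl

lemma ztensor_smul_right (p : C₁.Chain) (ε : ZMod 2) (q : C₂.Chain) :
    ztensor p (ε • q) = ε • ztensor p q := by
  funext x; simp only [ztensor, Pi.smul_apply, smul_eq_mul]; ring

lemma tensor_sum (f : (C₁.tensor C₂).B → ZMod 2) :
    (∑ x : (C₁.tensor C₂).B, f x) = ∑ a : C₁.B, ∑ b : C₂.B, f (a, b) :=
  Fintype.sum_prod_type f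

lemma tensor_bdry (c : (C₁.tensor C₂).Chain) (a : C₁.B) (b : C₂.B) :
    (C₁.tensor C₂).bdry c (a, b)
      = (∑ x, c (x, b) * C₁.d x a) + (∑ y, c (a, y) * C₂.d y b) := by
  have h : (C₁.tensor C₂).bdry c (a, b)
      = ∑ x : C₁.B, ∑ y : C₂.B, c (x, y) *
          ((if y = b then C₁.d x a else 0) + (if x = a then C₂.d y b else 0)) :=
    tensor_sum _
  rw [h]
  have h2 : ∀ x : C₁.B, (∑ y : C₂.B, c (x, y) *
      ((if y = b then C₁.d x a else 0) + (if x = a then C₂.d y b else 0)))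
      = c (x, b) * C₁.d x a + (if x = a then ∑ y : C₂.B, c (x, y) * C₂.d y b else 0) := by
    intro x
    rw [show (∑ y : C₂.B, c (x, y) *
        ((if y = b then C₁.d x a else 0) + (if x = a then C₂.d y b else 0)))
        = (∑ y : C₂.B, (if y = b then c (x, y) * C₁.d x a else 0))
          + ∑ y : C₂.B, (if x = a then c (x, y) * C₂.d y b else 0) by
      rw [← Finset.sum_add_distrib]
      apply Finset.sum_congr rfl
      intro y _
      by_cases h1 : y = b <;> by_cases h3 : x = a <;> simp [h1, h3, mul_add]]
    congr 1
    · simp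
    · by_cases h3 : x = a <;> simp [h3]
  rw [Finset.sum_congr rfl (fun x _ => h2 x), Finset.sum_add_distrib]
  congr 1
  simp

lemma tensor_bdry_ztensor (p : C₁.Chain) (q : C₂.Chain) :
    (C₁.tensor C₂).bdry (ztensor p q)
      = ztensor (C₁.bdry p) q + ztensor p (C₂.bdry q) := by
  funext x
  obtain ⟨a, b⟩ := x
  erw [Pi.add_apply]
  rw [tensor_bdry, ztensor_apply, ztensor_apply]
  show _ = (∑ s, p s * C₁.d s a) * q b + p a * ∑ s, q s * C₂.d s b
  rw [Finset.sum_mul, Finset.mul_sum]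
  congr 1
  · apply Finset.sum_congr rfl; intro s _; rw [ztensor_apply]; ring
  · apply Finset.sum_congr rfl; intro s _; rw [ztensor_apply]; ring

lemma tensor_cocycle {ψ₁ : C₁.B → ZMod 2} {ψ₂ : C₂.B → ZMod 2}
    (hco₁ : ∀ a, (∑ a', C₁.d a a' * ψ₁ a') = 0)
    (hco₂ : ∀ b, (∑ b', C₂.d b b' * ψ₂ b') = 0) (p : (C₁.tensor C₂).B) :
    (∑ x : (C₁.tensor C₂).B, (C₁.tensor C₂).d p x * (ψ₁ x.1 * ψ₂ x.2)) = 0 := by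
  obtain ⟨a₀, b₀⟩ := p
  rw [tensor_sum]
  have key : ∀ (a : C₁.B) (b : C₂.B),
      (C₁.tensor C₂).d (a₀, b₀) (a, b) * (ψ₁ a * ψ₂ b)
      = (if b₀ = b then C₁.d a₀ a * ψ₁ a * ψ₂ b else 0)
        + (if a₀ = a then C₂.d b₀ b * ψ₂ b * ψ₁ a else 0) := by
    intro a b
    show ((if b₀ = b then C₁.d a₀ a else 0) + (if a₀ = a then C₂.d b₀ b else 0))
        * (ψ₁ a * ψ₂ b) = _
    by_cases h1 : b₀ = b <;> by_cases h2 : a₀ = a <;> simp [h1, h2] <;> ring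
  calc (∑ a : C₁.B, ∑ b : C₂.B, (C₁.tensor C₂).d (a₀, b₀) (a, b) * (ψ₁ a * ψ₂ b))
      = (∑ a : C₁.B, ∑ b : C₂.B, (if b₀ = b then C₁.d a₀ a * ψ₁ a * ψ₂ b else 0))
        + ∑ a : C₁.B, ∑ b : C₂.B, (if a₀ = a then C₂.d b₀ b * ψ₂ b * ψ₁ a else 0) := by
        rw [← Finset.sum_add_distrib]
        apply Finset.sum_congr rfl
        intro a _
        rw [← Finset.sum_add_distrib]
        exact Finset.sum_congr rfl fun b _ => key a b
  _ = (∑ a : C₁.B, C₁.d a₀ a * ψ₁ a * ψ₂ b₀)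
        + ∑ a : C₁.B, (if a₀ = a then ∑ b : C₂.B, C₂.d b₀ b * ψ₂ b * ψ₁ a else 0) := by
        congr 1
        · apply Finset.sum_congr rfl
          intro a _
          rw [Finset.sum_ite_eq]
          simp
        · apply Finset.sum_congr rfl
          intro a _
          by_cases h2 : a₀ = a <;> simp [h2]
  _ = 0 := by
        rw [Finset.sum_ite_eq]
        simp only [Finset.mem_univ, if_true]
        have e1 : (∑ a : C₁.B, C₁.d a₀ a * ψ₁ a * ψ₂ b₀)
            = (∑ a : C₁.B, C₁.d a₀ a * ψ₁ a) * ψ₂ b₀ := by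
          rw [Finset.sum_mul]
        have e2 : (∑ b : C₂.B, C₂.d b₀ b * ψ₂ b * ψ₁ a₀)
            = (∑ b : C₂.B, C₂.d b₀ b * ψ₂ b) * ψ₁ a₀ := by
          rw [Finset.sum_mul]
        rw [e1, e2, hco₁, hco₂, zero_mul, zero_mul, add_zero]

lemma pair_ztensor (p : C₁.Chain) (q : C₂.Chain)
    (ψ₁ : C₁.B → ZMod 2) (ψ₂ : C₂.B → ZMod 2) :
    (∑ x : (C₁.tensor C₂).B, ztensor p q x * (ψ₁ x.1 * ψ₂ x.2))
      = (∑ a, p a * ψ₁ a) * (∑ b, q b * ψ₂ b) := by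
  rw [tensor_sum, Finset.sum_mul_sum]
  apply Finset.sum_congr rfl
  intro a _
  apply Finset.sum_congr rfl
  intro b _
  rw [ztensor_apply]
  ring

/-- Any cycle in the tensor product is, modulo boundaries, of the form `z₀ ⊗ c`. -/
lemma tensor_reduce (hC₁ : C₁.IsModel) {z₀ : C₁.Chain} (hz₀ : C₁.GenCycle z₀)
    {ψ : C₁.B → ZMod 2} (hco : ∀ a, (∑ a', C₁.d a a' * ψ a') = 0)
    (hev : (∑ a, z₀ a * ψ a) = 1)
    {z : (C₁.tensor C₂).Chain} (hz : (C₁.tensor C₂).isCycle z) :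
    ∃ (W : (C₁.tensor C₂).Chain) (c : C₂.Chain),
      C₂.isCycle c ∧ z = (C₁.tensor C₂).bdry W + ztensor z₀ c := by
  obtain ⟨h, θ, hhom, hθ⟩ := exists_homotopy hC₁ hz₀ hco hev
  set row : C₂.B → C₁.Chain := fun b => (fun s => z (s, b)) with hrowdef
  set K : (C₁.tensor C₂).Chain := fun x => h (row x.2) x.1 with hK
  set c : C₂.Chain := fun b => θ (row b) with hc
  have hzc : ∀ (a : C₁.B) (b : C₂.B),
      C₁.bdry (row b) a + (∑ y, z (a, y) * C₂.d y b) = 0 := by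
    intro a b
    have h0 : (C₁.tensor C₂).bdry z (a, b) = 0 := by rw [hz]; rfl
    rw [tensor_bdry] at h0
    exact h0
  have hrow : ∀ b : C₂.B, C₁.bdry (row b) = ∑ y, (C₂.d y b) • row y := by
    intro b
    funext a
    have h1 := zmod2_eq_of_add_eq_zero (hzc a b)
    rw [h1, Finset.sum_apply]
    apply Finset.sum_congr rfl
    intro y _
    rw [Pi.smul_apply, smul_eq_mul]
    show z (a, y) * C₂.d y b = C₂.d y b * row y a
    rw [mul_comm]
  refine ⟨K, c, ?_, ?_⟩
  · -- c is a cycle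
    funext b'
    show (∑ b, c b * C₂.d b b') = 0
    have e1 : (∑ b, c b * C₂.d b b') = θ (∑ b, (C₂.d b b') • row b) := by
      rw [map_sum]
      apply Finset.sum_congr rfl
      intro b _
      rw [map_smul, smul_eq_mul, mul_comm]
    rw [e1, ← hrow b', hθ]
  · -- z = bdry K + z₀ ⊗ c
    funext x
    obtain ⟨a, b⟩ := x
    erw [Pi.add_apply]
    rw [tensor_bdry, ztensor_apply]
    have hKb : ∀ (s : C₁.B) (y : C₂.B), K (s, y) = h (row y) s := fun _ _ => rfl
    have e1 : (∑ s, K (s, b) * C₁.d s a) = C₁.bdry (h (row b)) a := by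
      apply Finset.sum_congr rfl
      intro s _
      rw [hKb]
    have e2 : (∑ y, K (a, y) * C₂.d y b) = h (C₁.bdry (row b)) a := by
      rw [hrow, map_sum, Finset.sum_apply]
      apply Finset.sum_congr rfl
      intro y _
      rw [map_smul, Pi.smul_apply, smul_eq_mul, mul_comm]
    rw [e1, e2]
    -- use the homotopy identity evaluated at `a`
    have hh := congrFun (hhom (row b)) a
    rw [Pi.add_apply, Pi.add_apply, Pi.smul_apply, smul_eq_mul] at hh
    -- hh : bdry (h (row b)) a + h (bdry (row b)) a = row b a + θ (row b) * z₀ a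
    rw [hh]
    show row b a = (row b a + θ (row b) * z₀ a) + z₀ a * θ (row b)
    rw [mul_comm (z₀ a), add_assoc, zmod2_add_self, add_zero]

end PreComplex

namespace PreComplex

variable {C₁ C₂ : PreComplex}

lemma ztensor_add_right (p : C₁.Chain) (q q' : C₂.Chain) :
    ztensor p (q + q') = ztensor p q + ztensor p q' := by
  funext x; simp [ztensor, Pi.add_apply, mul_add]

lemma ztensor_zero_left (q : C₂.Chain) : ztensor (0 : C₁.Chain) q = 0 := by
  funext x; simp [ztensor]

/-- The evaluation of the product cocycle on any generating cycle of the tensor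
product equals `1`. -/
lemma tensor_gen_eval (hC₁ : C₁.IsModel) (hC₂ : C₂.IsModel)
    {ψ₁ : C₁.B → ZMod 2} {ψ₂ : C₂.B → ZMod 2}
    (hco₁ : ∀ a, (∑ a', C₁.d a a' * ψ₁ a') = 0)
    (hco₂ : ∀ b, (∑ b', C₂.d b b' * ψ₂ b') = 0)
    (hev₁ : ∀ z, C₁.GenCycle z → (∑ a, z a * ψ₁ a) = 1)
    (hev₂ : ∀ z, C₂.GenCycle z → (∑ b, z b * ψ₂ b) = 1)
    {z : (C₁.tensor C₂).Chain} (hz : (C₁.tensor C₂).GenCycle z) :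
    (∑ x : (C₁.tensor C₂).B, z x * (ψ₁ x.1 * ψ₂ x.2)) = 1 := by
  obtain ⟨z₀₁, hz₀₁⟩ := isModel_gen hC₁
  obtain ⟨z₀₂, hz₀₂⟩ := isModel_gen hC₂
  obtain ⟨W, c, hcyc, hzeq⟩ := tensor_reduce hC₁ hz₀₁ hco₁ (hev₁ z₀₁ hz₀₁) hz.1
  obtain ⟨ε, v, hv⟩ := cycle_decomp hC₂ hz₀₂ hcyc
  have hceq : c = C₂.bdry v + ε • z₀₂ := by
    calc c = (c + ε • z₀₂) + ε • z₀₂ := by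
          rw [add_assoc, chain_add_self, add_zero]
    _ = C₂.bdry v + ε • z₀₂ := by rw [← hv]
  have hbz : ztensor z₀₁ (C₂.bdry v) = (C₁.tensor C₂).bdry (ztensor z₀₁ v) := by
    rw [tensor_bdry_ztensor, show C₁.bdry z₀₁ = 0 from hz₀₁.1, ztensor_zero_left, zero_add]
  have hsplit : z = (C₁.tensor C₂).bdry (W + ztensor z₀₁ v) + ε • ztensor z₀₁ z₀₂ := by
    rw [hzeq, hceq, ztensor_add_right, ztensor_smul_right, hbz, bdry_add, add_assoc]
  have hε : ε = 1 := by
    rcases zmod2_cases ε with h | h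
    · exfalso
      apply hz.2.2
      refine ⟨W + ztensor z₀₁ v, ?_⟩
      rw [hsplit, h, zero_smul, add_zero]
    · exact h
  rw [hε, one_smul] at hsplit
  have e0 : (∑ x : (C₁.tensor C₂).B, z x * (ψ₁ x.1 * ψ₂ x.2))
      = (∑ x : (C₁.tensor C₂).B,
          (C₁.tensor C₂).bdry (W + ztensor z₀₁ v) x * (ψ₁ x.1 * ψ₂ x.2))
        + ∑ x : (C₁.tensor C₂).B, ztensor z₀₁ z₀₂ x * (ψ₁ x.1 * ψ₂ x.2) := by
    rw [← Finset.sum_add_distrib]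
    apply Finset.sum_congr rfl
    intro x _
    rw [hsplit]
    show ((C₁.tensor C₂).bdry (W + ztensor z₀₁ v) x + ztensor z₀₁ z₀₂ x) * _ = _
    ring
  rw [e0, pair_bdry_eq_zero (tensor_cocycle hco₁ hco₂), pair_ztensor,
    hev₁ z₀₁ hz₀₁, hev₂ z₀₂ hz₀₂, zero_add, one_mul]

/-- The tensor product of generating cycles is a generating cycle. -/
lemma ztensor_gen (hC₁ : C₁.IsModel) (hC₂ : C₂.IsModel)
    {z₁ : C₁.Chain} {z₂ : C₂.Chain} (h₁ : C₁.GenCycle z₁) (h₂ : C₂.GenCycle z₂) :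
    (C₁.tensor C₂).GenCycle (ztensor z₁ z₂) := by
  obtain ⟨ψ₁, hco₁, hev₁, -⟩ := exists_cocycle_functional hC₁ 0
  obtain ⟨ψ₂, hco₂, hev₂, -⟩ := exists_cocycle_functional hC₂ 0
  refine ⟨?_, ?_, ?_⟩
  · show (C₁.tensor C₂).bdry (ztensor z₁ z₂) = 0
    rw [tensor_bdry_ztensor, show C₁.bdry z₁ = 0 from h₁.1,
      show C₂.bdry z₂ = 0 from h₂.1, ztensor_zero_left,
      show ztensor z₁ (0 : C₂.Chain) = 0 by funext x; simp [ztensor], add_zero]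
  · intro x hx
    have h1 : z₁ x.1 ≠ 0 ∧ z₂ x.2 ≠ 0 := by
      constructor <;> intro h <;> apply hx <;> show z₁ x.1 * z₂ x.2 = 0 <;>
        simp [h]
    have e1 : C₁.gr x.1 = 0 := h₁.2.1 x.1 h1.1
    have e2 : C₂.gr x.2 = 0 := h₂.2.1 x.2 h1.2
    show C₁.gr x.1 + C₂.gr x.2 = 0
    rw [e1, e2, add_zero]
  · rintro ⟨w, hw⟩
    have h0 : (∑ x : (C₁.tensor C₂).B, ztensor z₁ z₂ x * (ψ₁ x.1 * ψ₂ x.2)) = 0 := by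
      rw [← hw]
      exact pair_bdry_eq_zero (tensor_cocycle hco₁ hco₂) w
    rw [pair_ztensor, hev₁ z₁ h₁, hev₂ z₂ h₂, one_mul] at h0
    exact one_ne_zero h0

lemma tensor_gen_exists (hC₁ : C₁.IsModel) (hC₂ : C₂.IsModel) :
    ∃ z, (C₁.tensor C₂).GenCycle z := by
  obtain ⟨z₁, h₁⟩ := isModel_gen hC₁
  obtain ⟨z₂, h₂⟩ := isModel_gen hC₂
  exact ⟨ztensor z₁ z₂, ztensor_gen hC₁ hC₂ h₁ h₂⟩

lemma lf_tensor (u : ℝ) (x : (C₁.tensor C₂).B) :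
    (C₁.tensor C₂).lf u x = C₁.lf u x.1 + C₂.lf u x.2 := by
  show fval u ((C₁.alg x.1 + C₂.alg x.2), (C₁.alex x.1 + C₂.alex x.2))
      = fval u (C₁.lev x.1) + fval u (C₂.lev x.2)
  unfold fval lev
  push_cast
  ring

/-- Additivity of `gamma` under tensor products. -/
lemma gamma_tensor (hC₁ : C₁.IsModel) (hC₂ : C₂.IsModel) (u : ℝ) :
    (C₁.tensor C₂).gamma u = C₁.gamma u + C₂.gamma u := by
  obtain ⟨ψ₁, hco₁, hev₁, hsupp₁⟩ := exists_cocycle_functional hC₁ u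
  obtain ⟨ψ₂, hco₂, hev₂, hsupp₂⟩ := exists_cocycle_functional hC₂ u
  have hexT := tensor_gen_exists hC₁ hC₂
  apply le_antisymm
  · obtain ⟨z₁, h₁, hF₁⟩ := exists_gamma_min (isModel_gen hC₁) u
    obtain ⟨z₂, h₂, hF₂⟩ := exists_gamma_min (isModel_gen hC₂) u
    apply gamma_le hexT (ztensor_gen hC₁ hC₂ h₁ h₂)
    intro x hx
    have h1 : z₁ x.1 ≠ 0 ∧ z₂ x.2 ≠ 0 := by
      constructor <;> intro h <;> apply hx <;> show z₁ x.1 * z₂ x.2 = 0 <;>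
        simp [h]
    rw [show fval u ((C₁.tensor C₂).lev x) = (C₁.tensor C₂).lf u x from rfl, lf_tensor]
    exact add_le_add (hF₁ x.1 h1.1) (hF₂ x.2 h1.2)
  · -- lower bound: every generating cycle of the tensor reaches level γ₁ + γ₂
    have hlb : ∀ s : ℝ, (∃ z : (C₁.tensor C₂).Chain,
        (C₁.tensor C₂).GenCycle z ∧ (C₁.tensor C₂).inF u s z) →
        C₁.gamma u + C₂.gamma u ≤ s := by
      rintro s ⟨z, hz, hzF⟩
      have hsum := tensor_gen_eval hC₁ hC₂ hco₁ hco₂ hev₁ hev₂ hz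
      have hexx : ∃ x : (C₁.tensor C₂).B, z x ≠ 0 ∧ ψ₁ x.1 ≠ 0 ∧ ψ₂ x.2 ≠ 0 := by
        by_contra hno
        push_neg at hno
        have : (∑ x : (C₁.tensor C₂).B, z x * (ψ₁ x.1 * ψ₂ x.2)) = 0 := by
          apply Finset.sum_eq_zero
          intro x _
          by_cases h1 : z x = 0
          · rw [h1, zero_mul]
          · rcases (by
              by_cases h2 : ψ₁ x.1 = 0
              · exact Or.inl h2
              · exact Or.inr (hno x h1 h2) : ψ₁ x.1 = 0 ∨ ψ₂ x.2 = 0) with h | h <;>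
              rw [h] <;> ring
        rw [this] at hsum
        exact zero_ne_one hsum
      obtain ⟨x, hzx, hψ₁x, hψ₂x⟩ := hexx
      have h1 : C₁.gamma u ≤ C₁.lf u x.1 := hsupp₁ x.1 hψ₁x
      have h2 : C₂.gamma u ≤ C₂.lf u x.2 := hsupp₂ x.2 hψ₂x
      have h3 : (C₁.tensor C₂).lf u x ≤ s := hzF x hzx
      rw [lf_tensor] at h3
      linarith
    obtain ⟨z, hz, hzF⟩ := exists_gamma_min hexT u
    exact hlb _ ⟨z, hz, hzF⟩

end PreComplex

namespace PreComplex

variable {C : PreComplex}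

/-- Slope of the affine function `u ↦ lf u x`. -/
noncomputable def sl (C : PreComplex) (x : C.B) : ℝ := ((C.alex x : ℝ) - C.alg x) / 2

lemma lf_affine (t u : ℝ) (x : C.B) : C.lf u x = C.lf t x + (u - t) * C.sl x := by
  unfold lf fval sl lev
  ring

/-- Limit lemma: a chain lying in the minimizing subcomplexes on one side of `t`
lies in the minimizing subcomplex at `t`. -/
lemma inF_limit (hM : C.IsModel) (t e : ℝ) (he : |e| = 1) {z : C.Chain}
    (δ₀ : ℝ) (hδ₀ : 0 < δ₀)
    (hmem : ∀ δ : ℝ, 0 < δ → δ < δ₀ → C.inF (t + e * δ) (C.gamma (t + e * δ)) z) :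
    C.inF t (C.gamma t) z := by
  have hex := isModel_gen hM
  intro x hx
  show C.lf t x ≤ C.gamma t
  obtain ⟨zs, hgs, hFs⟩ := exists_gamma_min hex t
  have hne := suppF_nonempty (C := C) (genCycle_ne_zero hgs)
  set M : ℝ := (C.suppF zs).sup' hne (fun y => |C.sl y|) with hM0
  have hMnn : 0 ≤ M := by
    obtain ⟨y, hy⟩ := hne
    rw [hM0]
    exact le_trans (abs_nonneg (C.sl y)) (Finset.le_sup' (fun y => |C.sl y|) hy)
  set K : ℝ := M + |C.sl x| with hK
  have hKnn : 0 ≤ K := by positivity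
  have key : ∀ δ : ℝ, 0 < δ → δ < δ₀ → C.lf t x ≤ C.gamma t + δ * K := by
    intro δ h0 h1
    have hg : C.gamma (t + e * δ) ≤ C.gamma t + δ * M := by
      have step1 : C.gamma (t + e * δ) ≤
          (C.suppF zs).sup' hne (C.lf (t + e * δ)) := by
        apply gamma_le hex hgs
        rw [inF_iff]
        intro y hy
        exact Finset.le_sup' _ hy
      refine le_trans step1 ?_
      apply Finset.sup'_le
      intro y hy
      have e1 : C.lf (t + e * δ) y = C.lf t y + (e * δ) * C.sl y := by
        rw [lf_affine t (t + e * δ) y]; ring_nf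
      have e2 : (e * δ) * C.sl y ≤ δ * |C.sl y| := by
        calc (e * δ) * C.sl y ≤ |(e * δ) * C.sl y| := le_abs_self _
        _ = δ * |C.sl y| := by rw [abs_mul, abs_mul, he, one_mul, abs_of_pos h0]
      have e3 : C.lf t y ≤ C.gamma t := hFs y (mem_suppF.mp hy)
      have e4 : |C.sl y| ≤ M := by
        rw [hM0]; exact Finset.le_sup' (fun y => |C.sl y|) hy
      rw [e1]
      nlinarith
    have hzx : C.lf (t + e * δ) x ≤ C.gamma (t + e * δ) := hmem δ h0 h1 x hx
    have e1 : C.lf t x = C.lf (t + e * δ) x - (e * δ) * C.sl x := by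
      rw [lf_affine t (t + e * δ) x]; ring_nf
    have e2 : -((e * δ) * C.sl x) ≤ δ * |C.sl x| := by
      calc -((e * δ) * C.sl x) ≤ |(e * δ) * C.sl x| := neg_le_abs _
      _ = δ * |C.sl x| := by rw [abs_mul, abs_mul, he, one_mul, abs_of_pos h0]
    rw [e1]
    have : δ * M + δ * |C.sl x| = δ * K := by rw [hK]; ring
    nlinarith
  by_contra hgt
  push_neg at hgt
  set g : ℝ := C.lf t x - C.gamma t with hg
  have hgpos : 0 < g := by rw [hg]; linarith
  set δ : ℝ := min (δ₀ / 2) (g / (K + 1)) with hδ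
  have hδpos : 0 < δ := by
    apply lt_min (by linarith)
    positivity
  have hδlt : δ < δ₀ := lt_of_le_of_lt (min_le_left _ _) (by linarith)
  have h1 := key δ hδpos hδlt
  have h2 : δ ≤ g / (K + 1) := min_le_right _ _
  have h3 : δ * K ≤ (g / (K + 1)) * K := mul_le_mul_of_nonneg_right h2 hKnn
  have h4 : (g / (K + 1)) * K < g := by
    rw [div_mul_eq_mul_div, div_lt_iff₀ (by linarith : (0:ℝ) < K + 1)]
    nlinarith
  have h5 : δ * K < g := lt_of_le_of_lt h3 h4
  rw [hg] at h5
  linarith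

lemma Zminus_gen {t : ℝ} {z : C.Chain} (hz : z ∈ C.Zminus t) : C.GenCycle z := by
  obtain ⟨δ₀, hδ₀, h⟩ := hz
  exact (h (δ₀ / 2) (by linarith) (by linarith)).1

lemma Zplus_gen {t : ℝ} {z : C.Chain} (hz : z ∈ C.Zplus t) : C.GenCycle z := by
  obtain ⟨δ₀, hδ₀, h⟩ := hz
  exact (h (δ₀ / 2) (by linarith) (by linarith)).1

lemma Zminus_inF (hM : C.IsModel) {t : ℝ} {z : C.Chain} (hz : z ∈ C.Zminus t) :
    C.inF t (C.gamma t) z := by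
  obtain ⟨δ₀, hδ₀, h⟩ := hz
  apply inF_limit hM t (-1) (by norm_num) δ₀ hδ₀
  intro δ h1 h2
  rw [show t + (-1) * δ = t - δ by ring]
  exact (h δ h1 h2).2

lemma Zplus_inF (hM : C.IsModel) {t : ℝ} {z : C.Chain} (hz : z ∈ C.Zplus t) :
    C.inF t (C.gamma t) z := by
  obtain ⟨δ₀, hδ₀, h⟩ := hz
  apply inF_limit hM t 1 (by norm_num) δ₀ hδ₀
  intro δ h1 h2
  rw [show t + 1 * δ = t + δ by ring]
  exact (h δ h1 h2).2

end PreComplex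

namespace PreComplex

variable {C₁ C₂ : PreComplex}

lemma ztensor_ne {p : C₁.Chain} {q : C₂.Chain} {x : (C₁.tensor C₂).B}
    (h : ztensor p q x ≠ 0) : p x.1 ≠ 0 ∧ q x.2 ≠ 0 := by
  constructor <;> intro h0 <;> apply h <;> show p x.1 * q x.2 = 0 <;> simp [h0]

lemma ztensor_mem_Zminus (hC₁ : C₁.IsModel) (hC₂ : C₂.IsModel) {t : ℝ}
    {z₁ : C₁.Chain} {z₂ : C₂.Chain}
    (h₁ : z₁ ∈ C₁.Zminus t) (h₂ : z₂ ∈ C₂.Zminus t) :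
    ztensor z₁ z₂ ∈ (C₁.tensor C₂).Zminus t := by
  obtain ⟨δ₁, hδ₁, H₁⟩ := h₁
  obtain ⟨δ₂, hδ₂, H₂⟩ := h₂
  refine ⟨min δ₁ δ₂, lt_min hδ₁ hδ₂, ?_⟩
  intro δ h0 hlt
  have m₁ := H₁ δ h0 (lt_of_lt_of_le hlt (min_le_left _ _))
  have m₂ := H₂ δ h0 (lt_of_lt_of_le hlt (min_le_right _ _))
  refine ⟨ztensor_gen hC₁ hC₂ m₁.1 m₂.1, ?_⟩
  intro x hx
  obtain ⟨f₁, f₂⟩ := ztensor_ne hx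
  show (C₁.tensor C₂).lf (t - δ) x ≤ (C₁.tensor C₂).gamma (t - δ)
  rw [lf_tensor, gamma_tensor hC₁ hC₂]
  exact add_le_add (m₁.2 x.1 f₁) (m₂.2 x.2 f₂)

lemma ztensor_mem_Zplus (hC₁ : C₁.IsModel) (hC₂ : C₂.IsModel) {t : ℝ}
    {z₁ : C₁.Chain} {z₂ : C₂.Chain}
    (h₁ : z₁ ∈ C₁.Zplus t) (h₂ : z₂ ∈ C₂.Zplus t) :
    ztensor z₁ z₂ ∈ (C₁.tensor C₂).Zplus t := by
  obtain ⟨δ₁, hδ₁, H₁⟩ := h₁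
  obtain ⟨δ₂, hδ₂, H₂⟩ := h₂
  refine ⟨min δ₁ δ₂, lt_min hδ₁ hδ₂, ?_⟩
  intro δ h0 hlt
  have m₁ := H₁ δ h0 (lt_of_lt_of_le hlt (min_le_left _ _))
  have m₂ := H₂ δ h0 (lt_of_lt_of_le hlt (min_le_right _ _))
  refine ⟨ztensor_gen hC₁ hC₂ m₁.1 m₂.1, ?_⟩
  intro x hx
  obtain ⟨f₁, f₂⟩ := ztensor_ne hx
  show (C₁.tensor C₂).lf (t + δ) x ≤ (C₁.tensor C₂).gamma (t + δ)
  rw [lf_tensor, gamma_tensor hC₁ hC₂]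
  exact add_le_add (m₁.2 x.1 f₁) (m₂.2 x.2 f₂)

lemma ztensor_add_left (p p' : C₁.Chain) (q : C₂.Chain) :
    ztensor (p + p') q = ztensor p q + ztensor p' q := by
  funext x; simp [ztensor, Pi.add_apply, add_mul]

lemma ztensor_zero_right (p : C₁.Chain) : ztensor p (0 : C₂.Chain) = 0 := by
  funext x; simp [ztensor]

/-- The key geometric input: membership of the combined level in the
`gamma2Set` of the tensor product. -/
lemma gamma2Set_tensor (hC₁ : C₁.IsModel) (hC₂ : C₂.IsModel) {t ρ₁ ρ₂ : ℝ}
    (h₁ : ρ₁ ∈ C₁.gamma2Set t t) (h₂ : ρ₂ ∈ C₂.gamma2Set t t) :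
    max (ρ₁ + C₂.gamma t) (C₁.gamma t + ρ₂) ∈ (C₁.tensor C₂).gamma2Set t t := by
  obtain ⟨zm₁, hzm₁, zp₁, hzp₁, hreg₁m, hreg₁p, w₁, hw₁reg, hw₁⟩ := h₁
  obtain ⟨zm₂, hzm₂, zp₂, hzp₂, hreg₂m, hreg₂p, w₂, hw₂reg, hw₂⟩ := h₂
  set T := C₁.tensor C₂ with hT
  set R : ℝ := max (ρ₁ + C₂.gamma t) (C₁.gamma t + ρ₂) with hR
  have hγT : T.gamma t = C₁.gamma t + C₂.gamma t := gamma_tensor hC₁ hC₂ t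
  refine ⟨ztensor zm₁ zm₂, ztensor_mem_Zminus hC₁ hC₂ hzm₁ hzm₂,
    ztensor zp₁ zp₂, ztensor_mem_Zplus hC₁ hC₂ hzp₁ hzp₂, ?_, ?_, ?_⟩
  · intro x hx
    obtain ⟨f₁, f₂⟩ := ztensor_ne hx
    left
    show T.lf t x ≤ T.gamma t
    rw [lf_tensor, hγT]
    exact add_le_add (Zminus_inF hC₁ hzm₁ x.1 f₁) (Zminus_inF hC₂ hzm₂ x.2 f₂)
  · intro x hx
    obtain ⟨f₁, f₂⟩ := ztensor_ne hx
    left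
    show T.lf t x ≤ T.gamma t
    rw [lf_tensor, hγT]
    exact add_le_add (Zplus_inF hC₁ hzp₁ x.1 f₁) (Zplus_inF hC₂ hzp₂ x.2 f₂)
  · refine ⟨ztensor w₁ zm₂ + ztensor zp₁ w₂, ?_, ?_⟩
    · intro x hx
      have hcases : ztensor w₁ zm₂ x ≠ 0 ∨ ztensor zp₁ w₂ x ≠ 0 := by
        by_contra hno
        push_neg at hno
        exact hx (by rw [Pi.add_apply, hno.1, hno.2, add_zero])
      rcases hcases with h | h
      · obtain ⟨f₁, f₂⟩ := ztensor_ne h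
        have hb₂ : C₂.lf t x.2 ≤ C₂.gamma t := Zminus_inF hC₂ hzm₂ x.2 f₂
        rcases hw₁reg x.1 f₁ with hl | hr
        · left
          show T.lf t x ≤ T.gamma t
          rw [lf_tensor, hγT]
          exact add_le_add hl hb₂
        · right
          show T.lf t x ≤ R
          rw [lf_tensor]
          refine le_trans (add_le_add hr hb₂) (le_trans ?_ (le_max_left _ _))
          exact le_refl _
      · obtain ⟨f₁, f₂⟩ := ztensor_ne h
        have hb₁ : C₁.lf t x.1 ≤ C₁.gamma t := Zplus_inF hC₁ hzp₁ x.1 f₁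
        rcases hw₂reg x.2 f₂ with hl | hr
        · left
          show T.lf t x ≤ T.gamma t
          rw [lf_tensor, hγT]
          exact add_le_add hb₁ hl
        · right
          show T.lf t x ≤ R
          rw [lf_tensor]
          refine le_trans (add_le_add hb₁ hr) (le_max_right _ _)
    · -- boundary computation
      have hbm₂ : C₂.bdry zm₂ = 0 := (Zminus_gen hzm₂).1
      have hbp₁ : C₁.bdry zp₁ = 0 := (Zplus_gen hzp₁).1
      rw [bdry_add, tensor_bdry_ztensor, tensor_bdry_ztensor, hw₁, hw₂, hbm₂, hbp₁,
        ztensor_zero_right, ztensor_zero_left, add_zero, zero_add,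
        ztensor_add_left, ztensor_add_right]
      rw [show ztensor zm₁ zm₂ + ztensor zp₁ zm₂ + (ztensor zp₁ zm₂ + ztensor zp₁ zp₂)
          = ztensor zm₁ zm₂ + ztensor zp₁ zp₂ + (ztensor zp₁ zm₂ + ztensor zp₁ zm₂) by
        abel, chain_add_self, add_zero]

end PreComplex

namespace PreComplex

lemma er_shift (r : EReal) (a b : ℝ) : (r + (a : EReal)) - (b : EReal) = r + ((a - b : ℝ) : EReal) := by
  rw [sub_eq_add_neg, add_assoc, ← EReal.coe_neg, ← EReal.coe_add, sub_eq_add_neg]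

lemma er_neg2_lt_zero : (-2 : EReal) < 0 := by
  have h : ((-2 : ℝ) : EReal) < ((0 : ℝ) : EReal) := EReal.coe_lt_coe_iff.mpr (by norm_num)
  simpa using h

lemma er_anti {a b : EReal} (hab : a ≤ b) : (-2 : EReal) * b ≤ (-2 : EReal) * a := by
  have h2 : (-2 : EReal) = -(2 : EReal) := by norm_num
  rw [h2, EReal.neg_mul, EReal.neg_mul, EReal.neg_le_neg_iff]
  exact mul_le_mul_of_nonneg_left hab (by norm_num : (0 : EReal) ≤ 2)

end PreComplex

theorem upsilon2_subadditive_aux (C₁ C₂ : PreComplex)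
    (hC₁ : C₁.IsModel) (hC₂ : C₂.IsModel)
    (t : ℝ) (ht : t ∈ Set.Ioo (0 : ℝ) 2) :
    min (C₁.Upsilon2 t t) (C₂.Upsilon2 t t) ≤ (C₁.tensor C₂).Upsilon2 t t := by
  classical
  open PreComplex in
  by_cases hS₁ : C₁.gamma2Set t t = ∅
  · have h1 : C₁.gamma2 t t = ⊤ := by
      unfold PreComplex.gamma2
      rw [hS₁, Set.image_empty, sInf_empty]
    have h2 : C₁.Upsilon2 t t = ⊥ := by
      unfold PreComplex.Upsilon2
      rw [h1, EReal.top_sub_coe, EReal.mul_top_of_neg er_neg2_lt_zero]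
    exact le_trans (min_le_left _ _) (h2 ▸ bot_le)
  by_cases hS₂ : C₂.gamma2Set t t = ∅
  · have h1 : C₂.gamma2 t t = ⊤ := by
      unfold PreComplex.gamma2
      rw [hS₂, Set.image_empty, sInf_empty]
    have h2 : C₂.Upsilon2 t t = ⊥ := by
      unfold PreComplex.Upsilon2
      rw [h1, EReal.top_sub_coe, EReal.mul_top_of_neg er_neg2_lt_zero]
    exact le_trans (min_le_right _ _) (h2 ▸ bot_le)
  have hγT : (C₁.tensor C₂).gamma t = C₁.gamma t + C₂.gamma t :=
    PreComplex.gamma_tensor hC₁ hC₂ t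
  set g₁ : ℝ := C₁.gamma t with hg₁
  set g₂ : ℝ := C₂.gamma t with hg₂
  set r₁ : EReal := C₁.gamma2 t t with hr₁
  set r₂ : EReal := C₂.gamma2 t t with hr₂
  set rT : EReal := (C₁.tensor C₂).gamma2 t t with hrT
  -- the key inequality
  have key : rT ≤ max (r₁ + (g₂ : EReal)) ((g₁ : EReal) + r₂) := by
    by_contra hlt
    push_neg at hlt
    obtain ⟨x, hx1, hx2⟩ := EReal.exists_between_coe_real hlt
    rw [max_lt_iff] at hx1
    obtain ⟨hx11, hx12⟩ := hx1
    -- extract elements of the gamma2Sets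
    have hinf₁ : sInf ((fun r : ℝ => (r : EReal)) '' C₁.gamma2Set t t)
        < ((x - g₂ : ℝ) : EReal) := by
      by_contra hc
      push_neg at hc
      have : ((x - g₂ : ℝ) : EReal) + (g₂ : EReal) ≤ r₁ + (g₂ : EReal) :=
        add_le_add_left hc _
      rw [← EReal.coe_add] at this
      have hxx : ((x : ℝ) : EReal) ≤ r₁ + (g₂ : EReal) := by
        rw [show x - g₂ + g₂ = x by ring] at this
        exact this
      exact absurd hxx (not_le.mpr hx11)
    obtain ⟨ρe, hρe, hρelt⟩ := sInf_lt_iff.mp hinf₁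
    obtain ⟨ρ₁, hρ₁, rfl⟩ := hρe
    have hρ₁lt : ρ₁ < x - g₂ := EReal.coe_lt_coe_iff.mp hρelt
    have hinf₂ : sInf ((fun r : ℝ => (r : EReal)) '' C₂.gamma2Set t t)
        < ((x - g₁ : ℝ) : EReal) := by
      by_contra hc
      push_neg at hc
      have : ((x - g₁ : ℝ) : EReal) + (g₁ : EReal) ≤ r₂ + (g₁ : EReal) :=
        add_le_add_left hc _
      rw [← EReal.coe_add] at this
      have hxx : ((x : ℝ) : EReal) ≤ (g₁ : EReal) + r₂ := by
        rw [show x - g₁ + g₁ = x by ring] at this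
        rw [add_comm]
        exact this
      exact absurd hxx (not_le.mpr hx12)
    obtain ⟨ρe₂, hρe₂, hρe₂lt⟩ := sInf_lt_iff.mp hinf₂
    obtain ⟨ρ₂, hρ₂, rfl⟩ := hρe₂
    have hρ₂lt : ρ₂ < x - g₁ := EReal.coe_lt_coe_iff.mp hρe₂lt
    -- apply the geometric lemma
    have hmem := PreComplex.gamma2Set_tensor hC₁ hC₂ hρ₁ hρ₂
    have hle : rT ≤ ((max (ρ₁ + g₂) (g₁ + ρ₂) : ℝ) : EReal) :=
      sInf_le ⟨_, hmem, rfl⟩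
    have hRx : max (ρ₁ + g₂) (g₁ + ρ₂) < x := by
      apply max_lt <;> linarith
    have : rT < rT := by
      calc rT ≤ ((max (ρ₁ + g₂) (g₁ + ρ₂) : ℝ) : EReal) := hle
      _ < ((x : ℝ) : EReal) := EReal.coe_lt_coe_iff.mpr hRx
      _ < rT := hx2
    exact lt_irrefl _ this
  -- conclude
  have hq : rT - ((g₁ + g₂ : ℝ) : EReal) ≤ max (r₁ - (g₁ : EReal)) (r₂ - (g₂ : EReal)) := by
    have step := EReal.sub_le_sub key (le_refl ((g₁ + g₂ : ℝ) : EReal))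
    refine le_trans step ?_
    have e1 : (r₁ + (g₂ : EReal)) - ((g₁ + g₂ : ℝ) : EReal) = r₁ - (g₁ : EReal) := by
      rw [PreComplex.er_shift, show g₂ - (g₁ + g₂) = -g₁ by ring, EReal.coe_neg,
        ← sub_eq_add_neg]
    have e2 : ((g₁ : EReal) + r₂) - ((g₁ + g₂ : ℝ) : EReal) = r₂ - (g₂ : EReal) := by
      rw [add_comm, PreComplex.er_shift, show g₁ - (g₁ + g₂) = -g₂ by ring, EReal.coe_neg,
        ← sub_eq_add_neg]
    rcases le_total (r₁ + (g₂ : EReal)) ((g₁ : EReal) + r₂) with h | h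
    · rw [max_eq_right h, e2]
      exact le_max_right _ _
    · rw [max_eq_left h, e1]
      exact le_max_left _ _
  have h5 : (-2 : EReal) * (max (r₁ - (g₁ : EReal)) (r₂ - (g₂ : EReal)))
      ≤ (-2 : EReal) * (rT - ((g₁ + g₂ : ℝ) : EReal)) := PreComplex.er_anti hq
  have hUT : (C₁.tensor C₂).Upsilon2 t t
      = (-2 : EReal) * (rT - ((g₁ + g₂ : ℝ) : EReal)) := by
    unfold PreComplex.Upsilon2
    rw [hγT]
  have hU₁ : C₁.Upsilon2 t t = (-2 : EReal) * (r₁ - (g₁ : EReal)) := rfl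
  have hU₂ : C₂.Upsilon2 t t = (-2 : EReal) * (r₂ - (g₂ : EReal)) := rfl
  rw [hUT, hU₁, hU₂]
  rcases le_total (r₁ - (g₁ : EReal)) (r₂ - (g₂ : EReal)) with h | h
  · rw [max_eq_right h] at h5
    exact le_trans (min_le_right _ _) h5
  · rw [max_eq_left h] at h5
    exact le_trans (min_le_left _ _) h5

/-- subadditivity of `Υ²` under tensor product:
`Υ²_{C₁⊗C₂,t}(t) ≥ min{Υ²_{C₁,t}(t), Υ²_{C₂,t}(t)}`. -/
theorem upsilon2_subadditive (C₁ C₂ : PreComplex)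
    (hC₁ : C₁.IsModel) (hC₂ : C₂.IsModel)
    (t : ℝ) (ht : t ∈ Set.Ioo (0 : ℝ) 2) :
    min (C₁.Upsilon2 t t) (C₂.Upsilon2 t t) ≤ (C₁.tensor C₂).Upsilon2 t t := by
  exact upsilon2_subadditive_aux C₁ C₂ hC₁ hC₂ t ht
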